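/- Let (I, T) be a paracyclic object. Then there exist a natural number ℓ ≥ 1 and an order isomorphism e : ℤ ≃o I such that e (k + ℓ) = T (e k) for every integer k. (Every object of the paracyclic category is isomorphic to (1/ℓ)ℤ with its translation action, for some ℓ ≥ 1.) -/

import Mathlib

/-- Every order automorphism of `ℤ` is translation by a constant. -/
lemma orderIso_int_eq_add (g : ℤ ≃o ℤ) : ∀ k : ℤ, g k = k + g 0 := by
  have hstep : ∀ k : ℤ, g (k + 1) = g k + 1 := by
    intro k
    obtain ⟨m, hm⟩ := g.surjective (g k + 1)
    have hmk : k < m := by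
      have : g k < g m := by rw [hm]; exact lt_add_one _
      exact g.lt_iff_lt.mp this
    have h1 : g (k + 1) ≤ g m := g.le_iff_le.mpr hmk
    have h2 : g k < g (k + 1) := g.lt_iff_lt.mpr (lt_add_one k)
    omega
  intro k
  induction k using Int.induction_on with
  | zero => ring
  | succ n ih => rw [hstep, ih]; ring
  | pred n ih =>
      have := hstep (-(n : ℤ) - 1)
      simp only [sub_add_cancel] at this
      omega

/-- Every paracyclic object `(I, T)` — a nonempty linear order `I` in which
every closed interval is finite, together with an order automorphism `T` with `i < T i` for
all `i` — is isomorphic to `(1/ℓ)ℤ` with its translation action for some `ℓ ≥ 1`: there is an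
order isomorphism `e : ℤ ≃o I` intertwining translation by `ℓ` with `T`. -/
theorem stmt_0 {I : Type*} [LinearOrder I] [Nonempty I]
    (hfin : ∀ i j : I, (Set.Icc i j).Finite)
    (T : I ≃o I) (hT : ∀ i : I, i < T i) :
    ∃ ℓ : ℕ, 1 ≤ ℓ ∧ ∃ e : ℤ ≃o I, ∀ k : ℤ, e (k + (ℓ : ℤ)) = T (e k) := by
  letI : LocallyFiniteOrder I := LocallyFiniteOrder.ofFiniteIcc hfin
  haveI : NoMaxOrder I := ⟨fun i => ⟨T i, hT i⟩⟩
  haveI : NoMinOrder I := ⟨fun i => ⟨T.symm i, by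
    have := hT (T.symm i); simpa using this⟩⟩
  letI : SuccOrder I := LinearLocallyFiniteOrder.succOrder I
  letI : PredOrder I := LinearLocallyFiniteOrder.predOrder I
  let e₀ : ℤ ≃o I := (orderIsoIntOfLinearSuccPredArch (ι := I)).symm
  let g : ℤ ≃o ℤ := (e₀.trans T).trans e₀.symm
  have hg : ∀ k : ℤ, g k = k + g 0 := orderIso_int_eq_add g
  have hgpos : 0 < g 0 := by
    have : (0 : ℤ) < g 0 := e₀.lt_iff_lt.mp (by
      show e₀ 0 < e₀ (e₀.symm (T (e₀ 0)))
      rw [e₀.apply_symm_apply]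
      exact hT (e₀ 0))
    exact this
  refine ⟨(g 0).toNat, by omega, e₀, fun k => ?_⟩
  have : g k = k + (g 0).toNat := by rw [hg k]; omega
  have h2 : e₀ (g k) = T (e₀ k) := by
    show e₀ (e₀.symm (T (e₀ k))) = T (e₀ k)
    rw [e₀.apply_symm_apply]
  rw [← h2, this]
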